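/- For d = 2, with ψ = (φ, χ) and ψ' = (φ', χ') in ℝ² × ℝ, the weighted absolute value satisfies |A_n(u)|_Θ ψ · ψ' = ρ|v_n| φ_n^⊥ · φ'_n^⊥ + (χχ' + 2θ² φ_n φ'_n + (χ + ρ v_n φ_n)(χ' + ρ v_n φ'_n)) / √(4θ² + ρ² v_n²), where φ_n = φ·n and φ_n^⊥ = φ − φ_n n. -/

import Mathlib

open Matrix

private lemma mat3_eq {α : Type*} {a₁₁ a₁₂ a₁₃ a₂₁ a₂₂ a₂₃ a₃₁ a₃₂ a₃₃
    b₁₁ b₁₂ b₁₃ b₂₁ b₂₂ b₂₃ b₃₁ b₃₂ b₃₃ : α}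
    (h₁₁ : a₁₁ = b₁₁) (h₁₂ : a₁₂ = b₁₂) (h₁₃ : a₁₃ = b₁₃)
    (h₂₁ : a₂₁ = b₂₁) (h₂₂ : a₂₂ = b₂₂) (h₂₃ : a₂₃ = b₂₃)
    (h₃₁ : a₃₁ = b₃₁) (h₃₂ : a₃₂ = b₃₂) (h₃₃ : a₃₃ = b₃₃) :
    !![a₁₁, a₁₂, a₁₃; a₂₁, a₂₂, a₂₃; a₃₁, a₃₂, a₃₃] =
      !![b₁₁, b₁₂, b₁₃; b₂₁, b₂₂, b₂₃; b₃₁, b₃₂, b₃₃] := by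
  subst_vars; rfl

private lemma smul3 {α : Type*} [Monoid α] [MulAction α ℝ] (r : α)
    (a₁₁ a₁₂ a₁₃ a₂₁ a₂₂ a₂₃ a₃₁ a₃₂ a₃₃ : ℝ) :
    r • !![a₁₁, a₁₂, a₁₃; a₂₁, a₂₂, a₂₃; a₃₁, a₃₂, a₃₃] =
      !![r • a₁₁, r • a₁₂, r • a₁₃; r • a₂₁, r • a₂₂, r • a₂₃; r • a₃₁, r • a₃₂, r • a₃₃] := by
  ext i j
  fin_cases i <;> fin_cases j <;> simp

/-- For `d = 2`, `ψ = (φ, χ)`, `ψ' = (φ', χ')`: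
`|Aₙ(u)|_Θ ψ · ψ' = ρ|vₙ| φₙ^⊥ · φ'ₙ^⊥ + (χχ' + 2θ² φₙ φ'ₙ + (χ + ρ vₙ φₙ)(χ' + ρ vₙ φ'ₙ))/√(4θ² + ρ² vₙ²)`. -/
theorem stmt_5 (ρ θ vn : ℝ) (hρ : 0 < ρ) (hθ : 0 < θ)
    (n : Fin 2 → ℝ) (hn : n 0 ^ 2 + n 1 ^ 2 = 1)
    (Th A : Matrix (Fin 3) (Fin 3) ℝ)
    (hTh : Th = Matrix.diagonal ![1, 1, θ])
    (hA : A = !![ρ * vn, 0, n 0; 0, ρ * vn, n 1; n 0, n 1, 0])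
    (R : Matrix (Fin 3) (Fin 3) ℝ) (dv : Fin 3 → ℝ)
    (hR : R * Rᵀ = 1)
    (hdec : Th * A * Th = R * Matrix.diagonal dv * Rᵀ)
    (Mabs : Matrix (Fin 3) (Fin 3) ℝ)
    (hMabs : Mabs = Th⁻¹ * (R * Matrix.diagonal (fun i => |dv i|) * Rᵀ) * Th⁻¹)
    (φ φ' : Fin 2 → ℝ) (χ χ' : ℝ) (φn φ'n : ℝ)
    (hφn : φn = φ 0 * n 0 + φ 1 * n 1) (hφ'n : φ'n = φ' 0 * n 0 + φ' 1 * n 1) :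
    (Mabs *ᵥ ![φ 0, φ 1, χ]) ⬝ᵥ ![φ' 0, φ' 1, χ'] =
      ρ * |vn| * ((φ 0 - φn * n 0) * (φ' 0 - φ'n * n 0) + (φ 1 - φn * n 1) * (φ' 1 - φ'n * n 1))
      + (χ * χ' + 2 * θ ^ 2 * φn * φ'n + (χ + ρ * vn * φn) * (χ' + ρ * vn * φ'n))
          / Real.sqrt (4 * θ ^ 2 + ρ ^ 2 * vn ^ 2) := by
  subst hφn hφ'n
  have hθ0 : θ ≠ 0 := hθ.ne'
  set a : ℝ := ρ * vn with ha
  set b : ℝ := ρ * |vn| with hb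
  set s : ℝ := Real.sqrt (4 * θ ^ 2 + ρ ^ 2 * vn ^ 2) with hs
  have hn' : n 1 ^ 2 = 1 - n 0 ^ 2 := by linarith
  have hb0 : 0 ≤ b := by positivity
  have hb2 : b ^ 2 = a ^ 2 := by
    rw [hb, ha, mul_pow, mul_pow, sq_abs]
  have hspos : 0 < s := Real.sqrt_pos.mpr (by positivity)
  have hsne : s ≠ 0 := hspos.ne'
  have hs2 : s ^ 2 = 4 * θ ^ 2 + a ^ 2 := by
    rw [hs, Real.sq_sqrt (by positivity), ha]; ring
  have hsi : s * s⁻¹ = 1 := mul_inv_cancel₀ hsne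
  -- the scaled candidate for `|ΘAΘ|`
  obtain ⟨T, hT⟩ : ∃ T : Matrix (Fin 3) (Fin 3) ℝ, T =
      !![s*b*(1 - n 0^2) + (2*θ^2 + a^2)*(n 0)^2, (-(s*b) + (2*θ^2 + a^2))*(n 0*n 1), a*θ*n 0;
         (-(s*b) + (2*θ^2 + a^2))*(n 0*n 1), s*b*(1 - n 1^2) + (2*θ^2 + a^2)*(n 1)^2, a*θ*n 1;
         a*θ*n 0, a*θ*n 1, 2*θ^2] := ⟨_, rfl⟩
  obtain ⟨S, hSdef⟩ : ∃ S : Matrix (Fin 3) (Fin 3) ℝ, S =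
      !![a, 0, θ*n 0; 0, a, θ*n 1; θ*n 0, θ*n 1, 0] := ⟨_, rfl⟩
  have hTh3 : Th = !![1, 0, 0; 0, 1, 0; 0, 0, θ] := by
    rw [hTh]; ext i j; fin_cases i <;> fin_cases j <;> simp [Matrix.diagonal, Matrix.vecHead, Matrix.vecTail]
  have hS : Th * A * Th = S := by
    rw [hTh3, hA, hSdef, Matrix.mul_fin_three, Matrix.mul_fin_three]
    exact mat3_eq (by ring) (by ring) (by ring) (by ring) (by ring) (by ring)
      (by ring) (by ring) (by ring)
  -- B = s⁻¹ • T is positive semidefinite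
  have hBherm : (s⁻¹ • T).IsHermitian := by
    show (s⁻¹ • T)ᴴ = s⁻¹ • T
    rw [hT]
    ext i j
    fin_cases i <;> fin_cases j <;> simp [Matrix.conjTranspose_apply]
  have hBpsd : (s⁻¹ • T).PosSemidef := by
    refine Matrix.PosSemidef.of_dotProduct_mulVec_nonneg hBherm fun x => ?_
    have key : dotProduct x (T *ᵥ x) =
        s*b*(n 1*x 0 - n 0*x 1)^2 + 2*θ^2*(n 0*x 0 + n 1*x 1)^2 + θ^2*(x 2)^2
          + (a*(n 0*x 0 + n 1*x 1) + θ*x 2)^2 := by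
      rw [hT]
      simp [dotProduct, Matrix.mulVec, Fin.sum_univ_three]
      linear_combination (-1*s*b*(x 1)^2 - 1*s*b*(x 0)^2) * hn'
    have h1 : dotProduct (star x) ((s⁻¹ • T) *ᵥ x) = s⁻¹ * dotProduct x (T *ᵥ x) := by
      rw [Matrix.smul_mulVec, dotProduct_smul, star_trivial, smul_eq_mul]
    rw [h1, key]
    have h2 : 0 ≤ s⁻¹ := by positivity
    have h3 : 0 ≤ s*b := by positivity
    positivity
  -- (s⁻¹ • T)² = (ΘAΘ)²
  have hTT : T * T = (s^2) • (S * S) := by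
    rw [hT, hSdef, Matrix.mul_fin_three, Matrix.mul_fin_three, smul3]
    refine mat3_eq ?_ ?_ ?_ ?_ ?_ ?_ ?_ ?_ ?_ <;> rw [smul_eq_mul]
    · linear_combination (b^2 - 2*(n 0)^2*b^2 + (n 0)^2*(n 1)^2*b^2 + (n 0)^4*b^2 - 1*θ^2*(n 0)^2 - 1*a^2) * hs2 + (4*θ^2 - 8*θ^2*(n 0)^2 + 4*θ^2*(n 0)^2*(n 1)^2 + 4*θ^2*(n 0)^4 + a^2 - 2*a^2*(n 0)^2 + a^2*(n 0)^2*(n 1)^2 + a^2*(n 0)^4) * hb2 + (-4*θ^2*(n 0)^2*s*b + 4*θ^4*(n 0)^2 - 2*a^2*(n 0)^2*s*b + 8*a^2*θ^2*(n 0)^2 + 2*a^4*(n 0)^2) * hn'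
    · linear_combination (-2*(n 0)*(n 1)*b^2 + (n 0)*(n 1)^3*b^2 + (n 0)^3*(n 1)*b^2 - 1*θ^2*(n 0)*(n 1)) * hs2 + (-8*θ^2*(n 0)*(n 1) + 4*θ^2*(n 0)*(n 1)^3 + 4*θ^2*(n 0)^3*(n 1) - 2*a^2*(n 0)*(n 1) + a^2*(n 0)*(n 1)^3 + a^2*(n 0)^3*(n 1)) * hb2 + (-4*θ^2*(n 0)*(n 1)*s*b + 4*θ^4*(n 0)*(n 1) - 2*a^2*(n 0)*(n 1)*s*b + 8*a^2*θ^2*(n 0)*(n 1) + 2*a^4*(n 0)*(n 1)) * hn'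
    · linear_combination (-1*a*θ*(n 0)) * hs2 + (-1*a*θ*(n 0)*s*b + 2*a*θ^3*(n 0) + a^3*θ*(n 0)) * hn'
    · linear_combination (-2*(n 0)*(n 1)*b^2 + (n 0)*(n 1)^3*b^2 + (n 0)^3*(n 1)*b^2 - 1*θ^2*(n 0)*(n 1)) * hs2 + (-8*θ^2*(n 0)*(n 1) + 4*θ^2*(n 0)*(n 1)^3 + 4*θ^2*(n 0)^3*(n 1) - 2*a^2*(n 0)*(n 1) + a^2*(n 0)*(n 1)^3 + a^2*(n 0)^3*(n 1)) * hb2 + (-4*θ^2*(n 0)*(n 1)*s*b + 4*θ^4*(n 0)*(n 1) - 2*a^2*(n 0)*(n 1)*s*b + 8*a^2*θ^2*(n 0)*(n 1) + 2*a^4*(n 0)*(n 1)) * hn'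
    · linear_combination (b^2 - 2*(n 1)^2*b^2 + (n 1)^4*b^2 + (n 0)^2*(n 1)^2*b^2 - 1*θ^2*(n 1)^2 - 1*a^2) * hs2 + (4*θ^2 - 8*θ^2*(n 1)^2 + 4*θ^2*(n 1)^4 + 4*θ^2*(n 0)^2*(n 1)^2 + a^2 - 2*a^2*(n 1)^2 + a^2*(n 1)^4 + a^2*(n 0)^2*(n 1)^2) * hb2 + (-4*θ^2*(n 1)^2*s*b + 4*θ^4*(n 1)^2 - 2*a^2*(n 1)^2*s*b + 8*a^2*θ^2*(n 1)^2 + 2*a^4*(n 1)^2) * hn'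
    · linear_combination (-1*a*θ*(n 1)) * hs2 + (-1*a*θ*(n 1)*s*b + 2*a*θ^3*(n 1) + a^3*θ*(n 1)) * hn'
    · linear_combination (-1*a*θ*(n 0)) * hs2 + (-1*a*θ*(n 0)*s*b + 2*a*θ^3*(n 0) + a^3*θ*(n 0)) * hn'
    · linear_combination (-1*a*θ*(n 1)) * hs2 + (-1*a*θ*(n 1)*s*b + 2*a*θ^3*(n 1) + a^3*θ*(n 1)) * hn'
    · linear_combination (-1*θ^2*(n 1)^2 - 1*θ^2*(n 0)^2) * hs2 + (-4*θ^4) * hn'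
  have hB2 : (s⁻¹ • T) * (s⁻¹ • T) = S * S := by
    rw [Matrix.smul_mul, Matrix.mul_smul, smul_smul, hTT, smul_smul]
    rw [show s⁻¹ * s⁻¹ * s^2 = (s * s⁻¹) * (s * s⁻¹) by ring, hsi, one_mul, one_smul]
  -- the matrix from the decomposition
  obtain ⟨D, hD⟩ : ∃ D : Matrix (Fin 3) (Fin 3) ℝ,
      D = Matrix.diagonal (fun i => |dv i|) := ⟨_, rfl⟩
  have hRt : Rᴴ = Rᵀ := by ext i j; simp [Matrix.conjTranspose_apply]
  have hMpsd : (R * D * Rᵀ).PosSemidef := by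
    have h1 : D.PosSemidef := by
      rw [hD]; exact Matrix.PosSemidef.diagonal (fun i => abs_nonneg _)
    have := h1.mul_mul_conjTranspose_same R
    rwa [hRt] at this
  have hRtR : Rᵀ * R = 1 := mul_eq_one_comm.mp hR
  have hconj : ∀ E : Matrix (Fin 3) (Fin 3) ℝ, (R * E * Rᵀ) * (R * E * Rᵀ) = R * (E * E) * Rᵀ := by
    intro E
    calc (R * E * Rᵀ) * (R * E * Rᵀ) = R * E * (Rᵀ * R) * E * Rᵀ := by
          simp only [Matrix.mul_assoc]
      _ = R * (E * E) * Rᵀ := by rw [hRtR]; simp only [Matrix.mul_assoc, Matrix.one_mul]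
  have hDD : D * D = Matrix.diagonal dv * Matrix.diagonal dv := by
    rw [hD, Matrix.diagonal_mul_diagonal, Matrix.diagonal_mul_diagonal]
    exact congrArg _ (funext fun i => abs_mul_abs_self _)
  have hM2 : (R * D * Rᵀ) * (R * D * Rᵀ) = S * S := by
    rw [hconj D, hDD, ← hconj (Matrix.diagonal dv), ← hdec, hS]
  -- uniqueness of the PSD square root
  have hBM : s⁻¹ • T = R * D * Rᵀ := by
    open scoped MatrixOrder Matrix.Norms.L2Operator in
    apply (CFC.sq_eq_sq_iff _ _ (Matrix.nonneg_iff_posSemidef.mpr hBpsd) (Matrix.nonneg_iff_posSemidef.mpr hMpsd)).mp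
    rw [pow_two, pow_two, hB2, hM2]
  -- compute Θ⁻¹
  have hThinv : Th⁻¹ = !![1, 0, 0; 0, 1, 0; 0, 0, θ⁻¹] := by
    apply Matrix.inv_eq_right_inv
    rw [hTh3, Matrix.mul_fin_three, Matrix.one_fin_three]
    exact mat3_eq (by ring) (by ring) (by ring) (by ring) (by ring) (by ring)
      (by ring) (by ring) (by field_simp; norm_num)
  -- explicit form of Mabs
  obtain ⟨C, hC⟩ : ∃ C : Matrix (Fin 3) (Fin 3) ℝ, C =
      !![s*b*(1 - n 0^2) + (2*θ^2 + a^2)*(n 0)^2, (-(s*b) + (2*θ^2 + a^2))*(n 0*n 1), a*n 0;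
         (-(s*b) + (2*θ^2 + a^2))*(n 0*n 1), s*b*(1 - n 1^2) + (2*θ^2 + a^2)*(n 1)^2, a*n 1;
         a*n 0, a*n 1, 2] := ⟨_, rfl⟩
  have hMC : Mabs = s⁻¹ • C := by
    rw [hMabs, ← hD, ← hBM, Matrix.mul_smul, Matrix.smul_mul]
    congr 1
    rw [hThinv, hT, hC, Matrix.mul_fin_three, Matrix.mul_fin_three]
    refine mat3_eq (by ring) (by ring) ?_ (by ring) (by ring) ?_ ?_ ?_ ?_ <;> field_simp <;> ring
  rw [hMC, Matrix.smul_mulVec, smul_dotProduct, smul_eq_mul, hC]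
  simp [Matrix.mulVec, dotProduct, Fin.sum_univ_three]
  linear_combination (b*(φ 1)*(φ' 1) + b*(φ 0)*(φ' 0) - 1*(n 1)^2*b*(φ 1)*(φ' 1) - 1*(n 0)*(n 1)*b*(φ 1)*(φ' 0) - 1*(n 0)*(n 1)*b*(φ 0)*(φ' 1) - 1*(n 0)^2*b*(φ 0)*(φ' 0)) * hsi + (-1*(n 1)^2*b*(φ 1)*(φ' 1) - 1*(n 0)*(n 1)*b*(φ 1)*(φ' 0) - 1*(n 0)*(n 1)*b*(φ 0)*(φ' 1) - 1*(n 0)^2*b*(φ 0)*(φ' 0)) * hn'
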